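/- Let $M,N$ be dual lattices, $K\subset M_{\mathbb{Q}}$, $K^{\vee}\subset N_{\mathbb{Q}}$ dual Gorenstein cones with degree elements $\deg\in M$, $\deg^{\vee}\in N$, and let $\Delta=\{m\in K\cap M: m\cdot\deg^{\vee}=1\}$, $\Delta^{\vee}=\{n\in K^{\vee}\cap N: \deg\cdot n=1\}$. For coefficient functions $f:\Delta\to\mathbb{C}$, $g:\Delta^{\vee}\to\mathbb{C}$, the operator $d^A_{f,g}=\sum_{m\in\Delta}f(m)[m]\otimes(\wedge m)+\sum_{n\in\Delta^{\vee}}g(n)[n]\otimes\mathrm{contr}(n)$ on $\mathbb{C}[(K\oplus K^{\vee})_0]\otimes\Lambda^*(M_{\mathbb{C}})$ satisfies $(d^A_{f,g})^2=0$. -/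
import Mathlib


noncomputable section

open scoped Classical

/-- The pairing between the dual lattices `M = N = ℤ^d`. -/
def dotZ {d : ℕ} (m n : Fin d → ℤ) : ℤ := ∑ i, m i * n i

variable {d : ℕ}

/-- The exterior algebra `Λ^*(M_ℂ)`. -/
abbrev Lam (d : ℕ) := ExteriorAlgebra ℂ (Fin d → ℂ)

/-- The ambient module: formal `Λ^*(M_ℂ)`-valued combinations of monomials `[m ⊕ n]`,
`m, n ∈ ℤ^d`.  The semigroup-ring quotient `ℂ[(K ⊕ K^∨)₀] ⊗ Λ^*(M_ℂ)` is realized as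
the subspace supported on pairs `(m, n)` with `m ∈ K`, `n ∈ K^∨`, `m·n = 0`. -/
abbrev Amb (d : ℕ) := ((Fin d → ℤ) × (Fin d → ℤ)) →₀ Lam d

/-- A pair `(m, n)` indexes a nonzero basis monomial of `ℂ[(K ⊕ K^∨)₀]` iff `m ∈ K`,
`n ∈ K^∨` and `m·n = 0`. -/
def Adm (KM KN : AddSubmonoid (Fin d → ℤ)) (p : (Fin d → ℤ) × (Fin d → ℤ)) : Prop :=
  p.1 ∈ KM ∧ p.2 ∈ KN ∧ dotZ p.1 p.2 = 0

/-- Projection onto the span of the admissible monomials (i.e. reduction modulo the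
ideal generated by monomials `[m ⊕ n]` with `m·n > 0`). -/
def projA (KM KN : AddSubmonoid (Fin d → ℤ)) : Amb d →ₗ[ℂ] Amb d :=
  Finsupp.lsum ℂ fun p => if Adm KM KN p then (Finsupp.lsingle p : Lam d →ₗ[ℂ] Amb d) else 0

/-- Multiplication by the monomial `[a.1 ⊕ a.2]` on exponents. -/
def shiftA (a : (Fin d → ℤ) × (Fin d → ℤ)) : Amb d →ₗ[ℂ] Amb d :=
  Finsupp.lmapDomain (Lam d) ℂ (fun p => p + a)

/-- Exterior multiplication by `m ∈ M` on the `Λ^*(M_ℂ)` factor. -/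
def wedgeA (m : Fin d → ℤ) : Amb d →ₗ[ℂ] Amb d :=
  Finsupp.mapRange.linearMap
    (LinearMap.mulLeft ℂ (ExteriorAlgebra.ι ℂ (fun i => (m i : ℂ))))

/-- Contraction by `n ∈ N` (via the duality pairing) on the `Λ^*(M_ℂ)` factor. -/
def contrA (n : Fin d → ℤ) : Amb d →ₗ[ℂ] Amb d :=
  Finsupp.mapRange.linearMap
    (CliffordAlgebra.contractLeft (Q := (0 : QuadraticForm ℂ (Fin d → ℂ)))
      (∑ i, (n i : ℂ) • LinearMap.proj i))

/-- The operator `d^A_{f,g} = ∑_{m ∈ Δ} f(m) [m] ⊗ (∧ m) + ∑_{n ∈ Δ^∨} g(n) [n] ⊗ contr(n)`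
on `ℂ[(K ⊕ K^∨)₀] ⊗ Λ^*(M_ℂ)`. -/
def dA (KM KN : AddSubmonoid (Fin d → ℤ)) (Δ ΔV : Finset (Fin d → ℤ))
    (f g : (Fin d → ℤ) → ℂ) : Amb d →ₗ[ℂ] Amb d :=
  (∑ m ∈ Δ, f m • (projA KM KN ∘ₗ shiftA (m, 0) ∘ₗ wedgeA m)) +
  (∑ n ∈ ΔV, g n • (projA KM KN ∘ₗ shiftA (0, n) ∘ₗ contrA n))

/-! ### Auxiliary machinery -/

/-- Coefficient vector over `ℂ`. -/
def mC (m : Fin d → ℤ) : Fin d → ℂ := fun i => (m i : ℂ)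

/-- The dual functional attached to `n`. -/
def phiN (n : Fin d → ℤ) : Module.Dual ℂ (Fin d → ℂ) :=
  ∑ i, (n i : ℂ) • LinearMap.proj i

lemma phiN_mC (n m : Fin d → ℤ) : phiN n (mC m) = (dotZ m n : ℂ) := by
  simp [phiN, mC, dotZ, mul_comm]

lemma dotZ_add_left (m m' n : Fin d → ℤ) :
    dotZ (m + m') n = dotZ m n + dotZ m' n := by
  simp [dotZ, add_mul, Finset.sum_add_distrib]

lemma dotZ_add_right (m n n' : Fin d → ℤ) :
    dotZ m (n + n') = dotZ m n + dotZ m n' := by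
  simp [dotZ, mul_add, Finset.sum_add_distrib]

/-- The basic operators of the first kind. -/
def TA (KM KN : AddSubmonoid (Fin d → ℤ)) (m : Fin d → ℤ) : Amb d →ₗ[ℂ] Amb d :=
  projA KM KN ∘ₗ shiftA (m, 0) ∘ₗ wedgeA m

/-- The basic operators of the second kind. -/
def UA (KM KN : AddSubmonoid (Fin d → ℤ)) (n : Fin d → ℤ) : Amb d →ₗ[ℂ] Amb d :=
  projA KM KN ∘ₗ shiftA (0, n) ∘ₗ contrA n

lemma projA_single (KM KN : AddSubmonoid (Fin d → ℤ)) (p) (x : Lam d) :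
    projA KM KN (Finsupp.single p x) =
      if Adm KM KN p then Finsupp.single p x else 0 := by
  rw [projA, Finsupp.lsum_single]
  split_ifs <;> simp

lemma TA_single (KM KN : AddSubmonoid (Fin d → ℤ)) (m : Fin d → ℤ) (p) (x : Lam d) :
    TA KM KN m (Finsupp.single p x) =
      if Adm KM KN (p + (m, 0)) then
        Finsupp.single (p + (m, 0)) (ExteriorAlgebra.ι ℂ (mC m) * x) else 0 := by
  rw [TA]
  simp only [LinearMap.comp_apply, wedgeA, Finsupp.mapRange.linearMap_apply,
    Finsupp.mapRange_single, shiftA, Finsupp.lmapDomain_apply, Finsupp.mapDomain_single]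
  rw [projA_single]
  rfl

lemma UA_single (KM KN : AddSubmonoid (Fin d → ℤ)) (n : Fin d → ℤ) (p) (x : Lam d) :
    UA KM KN n (Finsupp.single p x) =
      if Adm KM KN (p + (0, n)) then
        Finsupp.single (p + (0, n))
          (CliffordAlgebra.contractLeft (Q := (0 : QuadraticForm ℂ (Fin d → ℂ)))
            (phiN n) x) else 0 := by
  rw [UA]
  simp only [LinearMap.comp_apply, contrA, Finsupp.mapRange.linearMap_apply,
    Finsupp.mapRange_single, shiftA, Finsupp.lmapDomain_apply, Finsupp.mapDomain_single]
  rw [projA_single]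
  rfl

lemma dot_nonneg {KM KN : AddSubmonoid (Fin d → ℤ)}
    (hdualN : ∀ n, n ∈ KN ↔ ∀ m ∈ KM, 0 ≤ dotZ m n)
    {m n : Fin d → ℤ} (hm : m ∈ KM) (hn : n ∈ KN) : 0 ≤ dotZ m n :=
  ((hdualN n).mp hn) m hm

lemma adm_TT_step (KM KN : AddSubmonoid (Fin d → ℤ)) (p : (Fin d → ℤ) × (Fin d → ℤ))
    (m m' : Fin d → ℤ) (hp : Adm KM KN p) (hm : m ∈ KM)
    (hnonneg : 0 ≤ dotZ m p.2) (hnonneg' : 0 ≤ dotZ m' p.2)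
    (h : Adm KM KN (p + (m, 0) + (m', 0))) : Adm KM KN (p + (m, 0)) := by
  obtain ⟨p1, p2, p3⟩ := hp
  obtain ⟨h1, h2, h3⟩ := h
  simp only [Adm, Prod.fst_add, Prod.snd_add, add_zero, zero_add, dotZ_add_left] at h1 h2 h3 ⊢
  exact ⟨KM.add_mem p1 hm, p2, by omega⟩

lemma adm_UU_step (KM KN : AddSubmonoid (Fin d → ℤ)) (p : (Fin d → ℤ) × (Fin d → ℤ))
    (n n' : Fin d → ℤ) (hp : Adm KM KN p) (hn : n ∈ KN)
    (hnonneg : 0 ≤ dotZ p.1 n) (hnonneg' : 0 ≤ dotZ p.1 n')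
    (h : Adm KM KN (p + (0, n) + (0, n'))) : Adm KM KN (p + (0, n)) := by
  obtain ⟨p1, p2, p3⟩ := hp
  obtain ⟨h1, h2, h3⟩ := h
  simp only [Adm, Prod.fst_add, Prod.snd_add, add_zero, zero_add, dotZ_add_right] at h1 h2 h3 ⊢
  exact ⟨p1, KN.add_mem p2 hn, by omega⟩

lemma adm_UT_step (KM KN : AddSubmonoid (Fin d → ℤ)) (p : (Fin d → ℤ) × (Fin d → ℤ))
    (m n : Fin d → ℤ) (hp : Adm KM KN p) (hm : m ∈ KM) (hn : n ∈ KN)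
    (h1 : 0 ≤ dotZ m p.2) (h2 : 0 ≤ dotZ p.1 n) (h3 : 0 ≤ dotZ m n)
    (h : Adm KM KN (p + (0, n) + (m, 0))) :
    Adm KM KN (p + (0, n)) ∧ Adm KM KN (p + (m, 0)) ∧ dotZ m n = 0 := by
  obtain ⟨p1, p2, p3⟩ := hp
  obtain ⟨q1, q2, q3⟩ := h
  simp only [Adm, Prod.fst_add, Prod.snd_add, add_zero, zero_add, dotZ_add_left,
    dotZ_add_right] at q1 q2 q3 ⊢
  exact ⟨⟨p1, KN.add_mem p2 hn, by omega⟩, ⟨KM.add_mem p1 hm, p2, by omega⟩, by omega⟩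


section anticomm

variable (KM KN : AddSubmonoid (Fin d → ℤ))

lemma TT_anticomm (p : (Fin d → ℤ) × (Fin d → ℤ)) (x : Lam d) (m m' : Fin d → ℤ)
    (hp : Adm KM KN p) (hm : m ∈ KM) (hm' : m' ∈ KM)
    (nn : 0 ≤ dotZ m p.2) (nn' : 0 ≤ dotZ m' p.2) :
    TA KM KN m' (TA KM KN m (Finsupp.single p x)) +
      TA KM KN m (TA KM KN m' (Finsupp.single p x)) = 0 := by
  have e1 : TA KM KN m' (TA KM KN m (Finsupp.single p x)) =
      if Adm KM KN (p + (m, 0) + (m', 0)) then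
        Finsupp.single (p + (m, 0) + (m', 0))
          (ExteriorAlgebra.ι ℂ (mC m') * (ExteriorAlgebra.ι ℂ (mC m) * x)) else 0 := by
    rw [TA_single]
    by_cases h1 : Adm KM KN (p + (m, 0))
    · rw [if_pos h1, TA_single]
    · rw [if_neg h1, map_zero,
        if_neg fun hf => h1 (adm_TT_step KM KN p m m' hp hm nn nn' hf)]
  have e2 : TA KM KN m (TA KM KN m' (Finsupp.single p x)) =
      if Adm KM KN (p + (m', 0) + (m, 0)) then
        Finsupp.single (p + (m', 0) + (m, 0))
          (ExteriorAlgebra.ι ℂ (mC m) * (ExteriorAlgebra.ι ℂ (mC m') * x)) else 0 := by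
    rw [TA_single]
    by_cases h1 : Adm KM KN (p + (m', 0))
    · rw [if_pos h1, TA_single]
    · rw [if_neg h1, map_zero,
        if_neg fun hf => h1 (adm_TT_step KM KN p m' m hp hm' nn' nn hf)]
  rw [e1, e2, add_right_comm p ((m', 0) : _ × _) (m, 0)]
  split_ifs with h
  · rw [← Finsupp.single_add]
    have hz : ExteriorAlgebra.ι ℂ (mC m') * (ExteriorAlgebra.ι ℂ (mC m) * x) +
        ExteriorAlgebra.ι ℂ (mC m) * (ExteriorAlgebra.ι ℂ (mC m') * x) = 0 := by
      rw [← mul_assoc, ← mul_assoc, ← add_mul, ExteriorAlgebra.ι_add_mul_swap, zero_mul]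
    rw [hz, Finsupp.single_zero]
  · simp

lemma UU_anticomm (p : (Fin d → ℤ) × (Fin d → ℤ)) (x : Lam d) (n n' : Fin d → ℤ)
    (hp : Adm KM KN p) (hn : n ∈ KN) (hn' : n' ∈ KN)
    (nn : 0 ≤ dotZ p.1 n) (nn' : 0 ≤ dotZ p.1 n') :
    UA KM KN n' (UA KM KN n (Finsupp.single p x)) +
      UA KM KN n (UA KM KN n' (Finsupp.single p x)) = 0 := by
  have e1 : UA KM KN n' (UA KM KN n (Finsupp.single p x)) =
      if Adm KM KN (p + (0, n) + (0, n')) then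
        Finsupp.single (p + (0, n) + (0, n'))
          (CliffordAlgebra.contractLeft (Q := (0 : QuadraticForm ℂ (Fin d → ℂ)))
            (phiN n') (CliffordAlgebra.contractLeft
              (Q := (0 : QuadraticForm ℂ (Fin d → ℂ))) (phiN n) x)) else 0 := by
    rw [UA_single]
    by_cases h1 : Adm KM KN (p + (0, n))
    · rw [if_pos h1, UA_single]
    · rw [if_neg h1, map_zero,
        if_neg fun hf => h1 (adm_UU_step KM KN p n n' hp hn nn nn' hf)]
  have e2 : UA KM KN n (UA KM KN n' (Finsupp.single p x)) =
      if Adm KM KN (p + (0, n') + (0, n)) then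
        Finsupp.single (p + (0, n') + (0, n))
          (CliffordAlgebra.contractLeft (Q := (0 : QuadraticForm ℂ (Fin d → ℂ)))
            (phiN n) (CliffordAlgebra.contractLeft
              (Q := (0 : QuadraticForm ℂ (Fin d → ℂ))) (phiN n') x)) else 0 := by
    rw [UA_single]
    by_cases h1 : Adm KM KN (p + (0, n'))
    · rw [if_pos h1, UA_single]
    · rw [if_neg h1, map_zero,
        if_neg fun hf => h1 (adm_UU_step KM KN p n' n hp hn' nn' nn hf)]
  rw [e1, e2, add_right_comm p ((0, n') : _ × _) (0, n)]
  split_ifs with h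
  · rw [← Finsupp.single_add, CliffordAlgebra.contractLeft_comm, neg_add_cancel,
      Finsupp.single_zero]
  · simp

lemma TU_anticomm (p : (Fin d → ℤ) × (Fin d → ℤ)) (x : Lam d) (m n : Fin d → ℤ)
    (hp : Adm KM KN p) (hm : m ∈ KM) (hn : n ∈ KN)
    (nn1 : 0 ≤ dotZ m p.2) (nn2 : 0 ≤ dotZ p.1 n) (nn3 : 0 ≤ dotZ m n) :
    TA KM KN m (UA KM KN n (Finsupp.single p x)) +
      UA KM KN n (TA KM KN m (Finsupp.single p x)) = 0 := by
  have e1 : TA KM KN m (UA KM KN n (Finsupp.single p x)) =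
      if Adm KM KN (p + (0, n) + (m, 0)) then
        Finsupp.single (p + (0, n) + (m, 0))
          (ExteriorAlgebra.ι ℂ (mC m) *
            (CliffordAlgebra.contractLeft (Q := (0 : QuadraticForm ℂ (Fin d → ℂ)))
              (phiN n) x)) else 0 := by
    rw [UA_single]
    by_cases h1 : Adm KM KN (p + (0, n))
    · rw [if_pos h1, TA_single]
    · rw [if_neg h1, map_zero,
        if_neg fun hf => h1 (adm_UT_step KM KN p m n hp hm hn nn1 nn2 nn3 hf).1]
  have e2 : UA KM KN n (TA KM KN m (Finsupp.single p x)) =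
      if Adm KM KN (p + (m, 0) + (0, n)) then
        Finsupp.single (p + (m, 0) + (0, n))
          (CliffordAlgebra.contractLeft (Q := (0 : QuadraticForm ℂ (Fin d → ℂ)))
            (phiN n) (ExteriorAlgebra.ι ℂ (mC m) * x)) else 0 := by
    rw [TA_single]
    by_cases h1 : Adm KM KN (p + (m, 0))
    · rw [if_pos h1, UA_single]
    · rw [if_neg h1, map_zero, if_neg]
      intro hf
      rw [add_right_comm] at hf
      exact h1 (adm_UT_step KM KN p m n hp hm hn nn1 nn2 nn3 hf).2.1
  rw [e1, e2, add_right_comm p ((m, 0) : _ × _) (0, n)]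
  split_ifs with h
  · rw [← Finsupp.single_add]
    obtain ⟨-, -, hdot⟩ := adm_UT_step KM KN p m n hp hm hn nn1 nn2 nn3 h
    have hz : ExteriorAlgebra.ι ℂ (mC m) *
        (CliffordAlgebra.contractLeft (Q := (0 : QuadraticForm ℂ (Fin d → ℂ)))
          (phiN n) x) +
        CliffordAlgebra.contractLeft (Q := (0 : QuadraticForm ℂ (Fin d → ℂ)))
          (phiN n) (ExteriorAlgebra.ι ℂ (mC m) * x) = 0 := by
      rw [CliffordAlgebra.contractLeft_ι_mul, phiN_mC, hdot]
      simp
    rw [hz, Finsupp.single_zero]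
  · simp

end anticomm

/-- for dual Gorenstein cones `K ⊂ M_ℚ`, `K^∨ ⊂ N_ℚ` (lattice points `K_M`,
`K_N`, each the dual of the other) with degree elements `deg ∈ K_M`, `deg^∨ ∈ K_N`, and
`Δ`, `Δ^∨` the degree-one lattice points, the operator `d^A_{f,g}` on
`ℂ[(K ⊕ K^∨)₀] ⊗ Λ^*(M_ℂ)` squares to zero. -/
theorem stmt10 (KM KN : AddSubmonoid (Fin d → ℤ))
    (hdualN : ∀ n, n ∈ KN ↔ ∀ m ∈ KM, 0 ≤ dotZ m n)
    (hdualM : ∀ m, m ∈ KM ↔ ∀ n ∈ KN, 0 ≤ dotZ m n)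
    (deg degV : Fin d → ℤ) (hdeg : deg ∈ KM) (hdegV : degV ∈ KN)
    (Δ ΔV : Finset (Fin d → ℤ))
    (hΔ : ∀ m, m ∈ Δ ↔ (m ∈ KM ∧ dotZ m degV = 1))
    (hΔV : ∀ n, n ∈ ΔV ↔ (n ∈ KN ∧ dotZ deg n = 1))
    (f g : (Fin d → ℤ) → ℂ) :
    ∀ v ∈ Finsupp.supported (Lam d) ℂ {p | Adm KM KN p},
      dA KM KN Δ ΔV f g (dA KM KN Δ ΔV f g v) = 0 := by
  intro v hv
  have hsupp : ↑v.support ⊆ {p | Adm KM KN p} := (Finsupp.mem_supported ℂ v).mp hv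
  have hΔK : ∀ m ∈ Δ, m ∈ KM := fun m hm => ((hΔ m).mp hm).1
  have hΔVK : ∀ n ∈ ΔV, n ∈ KN := fun n hn => ((hΔV n).mp hn).1
  have key : ∀ p, Adm KM KN p → ∀ x : Lam d,
      dA KM KN Δ ΔV f g (dA KM KN Δ ΔV f g (Finsupp.single p x)) = 0 := by
    intro p hp x
    have expand : ∀ w : Amb d, dA KM KN Δ ΔV f g w =
        (∑ m ∈ Δ, f m • TA KM KN m w) + (∑ n ∈ ΔV, g n • UA KM KN n w) := by
      intro w
      simp [dA, TA, UA, LinearMap.sum_apply]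
    set s : Amb d := Finsupp.single p x with hs
    have main : dA KM KN Δ ΔV f g (dA KM KN Δ ΔV f g s) =
        ((∑ a ∈ Δ, ∑ b ∈ Δ, (f a * f b) • TA KM KN a (TA KM KN b s))
        + (∑ a ∈ Δ, ∑ b ∈ ΔV, (f a * g b) • TA KM KN a (UA KM KN b s)))
        + ((∑ a ∈ ΔV, ∑ b ∈ Δ, (g a * f b) • UA KM KN a (TA KM KN b s))
        + (∑ a ∈ ΔV, ∑ b ∈ ΔV, (g a * g b) • UA KM KN a (UA KM KN b s))) := by
      rw [expand s, expand]
      simp only [map_add, map_sum, map_smul, smul_add, Finset.smul_sum, smul_smul,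
        Finset.sum_add_distrib]
    have hA1 : (∑ a ∈ Δ, ∑ b ∈ Δ, (f a * f b) • TA KM KN a (TA KM KN b s)) = 0 := by
      have hsum : (∑ a ∈ Δ, ∑ b ∈ Δ, (f a * f b) • TA KM KN a (TA KM KN b s))
          + (∑ a ∈ Δ, ∑ b ∈ Δ, (f a * f b) • TA KM KN a (TA KM KN b s)) = 0 := by
        nth_rewrite 2 [Finset.sum_comm]
        rw [← Finset.sum_add_distrib]
        refine Finset.sum_eq_zero fun a ha => ?_
        rw [← Finset.sum_add_distrib]
        refine Finset.sum_eq_zero fun b hb => ?_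
        rw [mul_comm (f b) (f a), ← smul_add,
          TT_anticomm KM KN p x b a hp (hΔK b hb) (hΔK a ha)
            (dot_nonneg hdualN (hΔK b hb) hp.2.1)
            (dot_nonneg hdualN (hΔK a ha) hp.2.1), smul_zero]
      have h2 : (2 : ℂ) • (∑ a ∈ Δ, ∑ b ∈ Δ, (f a * f b) • TA KM KN a (TA KM KN b s))
          = 0 := by rw [two_smul]; exact hsum
      have h3 := congrArg (fun z : Amb d => (2 : ℂ)⁻¹ • z) h2
      simp only [smul_smul, smul_zero] at h3
      norm_num at h3
      exact h3
    have hA4 : (∑ a ∈ ΔV, ∑ b ∈ ΔV, (g a * g b) • UA KM KN a (UA KM KN b s)) = 0 := by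
      have hsum : (∑ a ∈ ΔV, ∑ b ∈ ΔV, (g a * g b) • UA KM KN a (UA KM KN b s))
          + (∑ a ∈ ΔV, ∑ b ∈ ΔV, (g a * g b) • UA KM KN a (UA KM KN b s)) = 0 := by
        nth_rewrite 2 [Finset.sum_comm]
        rw [← Finset.sum_add_distrib]
        refine Finset.sum_eq_zero fun a ha => ?_
        rw [← Finset.sum_add_distrib]
        refine Finset.sum_eq_zero fun b hb => ?_
        rw [mul_comm (g b) (g a), ← smul_add,
          UU_anticomm KM KN p x b a hp (hΔVK b hb) (hΔVK a ha)
            (dot_nonneg hdualN hp.1 (hΔVK b hb))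
            (dot_nonneg hdualN hp.1 (hΔVK a ha)), smul_zero]
      have h2 : (2 : ℂ) • (∑ a ∈ ΔV, ∑ b ∈ ΔV, (g a * g b) • UA KM KN a (UA KM KN b s))
          = 0 := by rw [two_smul]; exact hsum
      have h3 := congrArg (fun z : Amb d => (2 : ℂ)⁻¹ • z) h2
      simp only [smul_smul, smul_zero] at h3
      norm_num at h3
      exact h3
    have hA23 : (∑ a ∈ Δ, ∑ b ∈ ΔV, (f a * g b) • TA KM KN a (UA KM KN b s))
        + (∑ a ∈ ΔV, ∑ b ∈ Δ, (g a * f b) • UA KM KN a (TA KM KN b s)) = 0 := by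
      rw [Finset.sum_comm (s := Δ) (t := ΔV), ← Finset.sum_add_distrib]
      refine Finset.sum_eq_zero fun n hn => ?_
      rw [← Finset.sum_add_distrib]
      refine Finset.sum_eq_zero fun m hm => ?_
      rw [mul_comm (g n) (f m), ← smul_add,
        TU_anticomm KM KN p x m n hp (hΔK m hm) (hΔVK n hn)
          (dot_nonneg hdualN (hΔK m hm) hp.2.1)
          (dot_nonneg hdualN hp.1 (hΔVK n hn))
          (dot_nonneg hdualN (hΔK m hm) (hΔVK n hn)), smul_zero]
    rw [main]
    rw [hA1, hA4, zero_add, add_zero]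
    exact hA23
  conv_lhs => rw [← Finsupp.sum_single v, Finsupp.sum]
  rw [map_sum, map_sum]
  exact Finset.sum_eq_zero fun q hq => key q (hsupp hq) (v q)

end
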